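/- If a finite set of existential rules R is parallelisable, then R is bounded: there exists an integer k such that for every instance I, the semi-oblivious chase of I with R terminates within k breadth-first steps, i.e., chase_k(I,R) = chase_∞(I,R). -/

import Mathlib

open scoped Classical
noncomputable section

namespace ER

/-- Terms: constants or variables (variables occurring in instances are called nulls). -/
inductive Term where
  | const : ℕ → Term
  | var : ℕ → Term
deriving DecidableEq

def Term.isConst : Term → Prop
  | .const _ => True
  | .var _ => False

/-- An atom `p(t₁,…,tₙ)`. -/
structure Atom where
  pred : ℕ
  args : List Term
deriving DecidableEq

def Atom.terms (a : Atom) : Set Term := {t | t ∈ a.args}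
def Atom.vars (a : Atom) : Set ℕ := {v | Term.var v ∈ a.args}

def termsOf (S : Set Atom) : Set Term := ⋃ a ∈ S, a.terms
def varsOf (S : Set Atom) : Set ℕ := ⋃ a ∈ S, a.vars
/-- The nulls (non-constant terms) occurring in a set of atoms. -/
def nullsOf (S : Set Atom) : Set Term := {t | t ∈ termsOf S ∧ ¬ t.isConst}

def Term.subst (σ : ℕ → Term) : Term → Term
  | .const c => .const c
  | .var v => σ v

def Atom.subst (σ : ℕ → Term) (a : Atom) : Atom := ⟨a.pred, a.args.map (Term.subst σ)⟩
def substSet (σ : ℕ → Term) (S : Set Atom) : Set Atom := (Atom.subst σ) '' S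

/-- A homomorphism from `S1` to `S2`: a substitution of variables by terms mapping `S1` into `S2`. -/
def isHom (σ : ℕ → Term) (S1 S2 : Set Atom) : Prop := substSet σ S1 ⊆ S2

/-- An injective homomorphism (injective on the terms of the source). -/
def isInjHom (σ : ℕ → Term) (S1 S2 : Set Atom) : Prop :=
  isHom σ S1 S2 ∧ Set.InjOn (Term.subst σ) (termsOf S1)

/-- An instance is a finite set of ground atoms. -/
def IsInstance (I : Set Atom) : Prop := I.Finite ∧ ∀ t ∈ termsOf I, t.isConst

/-- An existential rule, given by its body and head. -/
structure Rule where
  body : Set Atom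
  head : Set Atom

def Rule.frontier (R : Rule) : Set ℕ := varsOf R.body ∩ varsOf R.head
def Rule.exist (R : Rule) : Set ℕ := varsOf R.head \ varsOf R.body

/-- Well-formed rule: finite non-empty body and head, no constants. -/
def WfRule (R : Rule) : Prop :=
  R.body.Finite ∧ R.head.Finite ∧ R.body.Nonempty ∧ R.head.Nonempty ∧
  ∀ t ∈ termsOf (R.body ∪ R.head), ¬ t.isConst

def WfList (L : List Rule) : Prop := ∀ R ∈ L, WfRule R

/-- Restriction of a substitution to a set of variables (default value elsewhere). -/
def restrict (f : ℕ → Term) (F : Set ℕ) : ℕ → Term :=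
  fun v => if v ∈ F then f v else Term.const 0

/-- A semi-oblivious naming of nulls for the rules of `L`: the null created for an
existential variable depends only on the rule and the restriction of the trigger to the
frontier, and distinct such data yield distinct nulls. -/
def SONaming (L : List Rule) (ν : Rule → (ℕ → Term) → ℕ → ℕ) : Prop :=
  (∀ R ∈ L, ∀ f g : ℕ → Term,
      restrict f R.frontier = restrict g R.frontier → ν R f = ν R g) ∧
  (∀ R ∈ L, ∀ R' ∈ L, ∀ f f' x x', ν R f x = ν R' f' x' →
      R = R' ∧ restrict f R.frontier = restrict f' R'.frontier ∧ x = x')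

/-- The safe extension of a trigger `π`, replacing each existential variable by its null. -/
def safeSub (ν : Rule → (ℕ → Term) → ℕ → ℕ) (R : Rule) (π : ℕ → Term) : ℕ → Term :=
  fun y => if y ∈ R.exist then Term.var (ν R (restrict π R.frontier) y) else π y

/-- One breadth-first semi-oblivious chase step. -/
def chaseStep (ν : Rule → (ℕ → Term) → ℕ → ℕ) (L : List Rule) (S : Set Atom) : Set Atom :=
  S ∪ {a | ∃ R ∈ L, ∃ π : ℕ → Term, isHom π R.body S ∧ a ∈ substSet (safeSub ν R π) R.head}

/-- The breadth-first semi-oblivious chase. -/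
def chaseF (ν : Rule → (ℕ → Term) → ℕ → ℕ) (L : List Rule) (I : Set Atom) : ℕ → Set Atom
  | 0 => I
  | k + 1 => chaseStep ν L (chaseF ν L I k)

def chaseInf (ν : Rule → (ℕ → Term) → ℕ → ℕ) (L : List Rule) (I : Set Atom) : Set Atom :=
  ⋃ k, chaseF ν L I k

/-- `L'` parallelises `L`. -/
def Parallelises (L' L : List Rule) : Prop :=
  ∀ ν ν', SONaming L ν → SONaming L' ν' → ∀ I, IsInstance I →
    (∃ σ, isInjHom σ (chaseInf ν L I) (chaseF ν' L' I 1)) ∧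
    (∃ σ, isHom σ (chaseF ν' L' I 1) (chaseInf ν L I))

def Parallelisable (L : List Rule) : Prop := ∃ L', WfList L' ∧ Parallelises L' L

/-- Boundedness of the semi-oblivious chase, uniformly over all instances. -/
def Bounded (L : List Rule) : Prop :=
  ∃ k, ∀ ν, SONaming L ν → ∀ I, IsInstance I → chaseF ν L I k = chaseInf ν L I

def ChaseFinite (L : List Rule) : Prop :=
  ∀ ν, SONaming L ν → ∀ I, IsInstance I → ∃ k, chaseF ν L I k = chaseInf ν L I

/-- Two atoms are `T`-linked if they share a term of `T`. -/
def linked (T : Set Term) (a b : Atom) : Prop := ∃ t ∈ T, t ∈ a.terms ∧ t ∈ b.terms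

/-- Connectivity in `S` by a path of atoms where consecutive atoms share a term of `T`. -/
def connectedIn (S : Set Atom) (T : Set Term) (a b : Atom) : Prop :=
  a ∈ S ∧ b ∈ S ∧ Relation.ReflTransGen (fun x y => x ∈ S ∧ y ∈ S ∧ linked T x y) a b

/-- `P` is closed in `S` w.r.t. `T`-linkedness. -/
def closedIn (S : Set Atom) (T : Set Term) (P : Set Atom) : Prop :=
  ∀ a ∈ S, ∀ b ∈ P, linked T a b → a ∈ P

/-- A piece of `S` w.r.t. `T`: a non-empty subset closed under `T`-linkedness and minimal such. -/
def IsPiece (S : Set Atom) (T : Set Term) (P : Set Atom) : Prop :=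
  P.Nonempty ∧ P ⊆ S ∧ closedIn S T P ∧
  ∀ P', P' ⊆ P → P'.Nonempty → closedIn S T P' → P' = P

/-- A single-piece rule: its head is a piece of itself w.r.t. its existential variables. -/
def SinglePiece (R : Rule) : Prop := IsPiece R.head (Term.var '' R.exist) R.head

/-- The rule used at step `k` of a derivation. -/
def ruleAt (L : List Rule) (r : ℕ → ℕ) (k : ℕ) : Rule := L.getD (r k) ⟨∅, ∅⟩

/-- The set of atoms produced by the `k`-th rule application of a derivation. -/
def producedAt (ν : Rule → (ℕ → Term) → ℕ → ℕ) (L : List Rule) (r : ℕ → ℕ)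
    (π : ℕ → ℕ → Term) (k : ℕ) : Set Atom :=
  substSet (safeSub ν (ruleAt L r k) (π k)) (ruleAt L r k).head

def derivState (ν : Rule → (ℕ → Term) → ℕ → ℕ) (L : List Rule) (I : Set Atom)
    (r : ℕ → ℕ) (π : ℕ → ℕ → Term) : ℕ → Set Atom
  | 0 => I
  | k + 1 => derivState ν L I r π k ∪ producedAt ν L r π k

/-- An `R`-derivation of length `n` from `I`: each step applies a trigger. -/
def IsDeriv (ν : Rule → (ℕ → Term) → ℕ → ℕ) (L : List Rule) (I : Set Atom) (n : ℕ)
    (r : ℕ → ℕ) (π : ℕ → ℕ → Term) : Prop :=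
  ∀ k < n, r k < L.length ∧ isHom (π k) (ruleAt L r k).body (derivState ν L I r π k)

/-- A pieceful derivation: each trigger maps its rule's frontier entirely into the terms of
the initial instance, or entirely into the terms produced by a single earlier application. -/
def PiecefulDeriv (ν : Rule → (ℕ → Term) → ℕ → ℕ) (L : List Rule) (I : Set Atom) (n : ℕ)
    (r : ℕ → ℕ) (π : ℕ → ℕ → Term) : Prop :=
  ∀ k < n, (∀ x ∈ (ruleAt L r k).frontier, π k x ∈ termsOf I) ∨
    ∃ j < k, ∀ x ∈ (ruleAt L r k).frontier, π k x ∈ termsOf (producedAt ν L r π j)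

/-- A pieceful rule set: every derivation from every instance is pieceful. -/
def PiecefulSet (L : List Rule) : Prop :=
  ∀ ν, SONaming L ν → ∀ I, IsInstance I → ∀ n r π,
    IsDeriv ν L I n r π → PiecefulDeriv ν L I n r π

/-- First-order structures for the semantics of rules. -/
structure Struct where
  D : Type
  nonempty : Nonempty D
  interp : ℕ → List D → Prop
  cinterp : ℕ → D

def evalT (M : Struct) (v : ℕ → M.D) : Term → M.D
  | .const c => M.cinterp c
  | .var x => v x

def holdsA (M : Struct) (v : ℕ → M.D) (a : Atom) : Prop :=
  M.interp a.pred (a.args.map (evalT M v))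

/-- Satisfaction of (the universal-existential closure of) a rule in a structure. -/
def satRule (M : Struct) (R : Rule) : Prop :=
  ∀ v : ℕ → M.D, (∀ a ∈ R.body, holdsA M v a) →
    ∃ w : ℕ → M.D, (∀ x ∈ varsOf R.body, w x = v x) ∧ ∀ a ∈ R.head, holdsA M w a

/-- Separating variables of `S' ⊆ S`: variables occurring both in `S'` and in `S \ S'`. -/
def sepVars (S' S : Set Atom) : Set ℕ := varsOf S' ∩ varsOf (S \ S')

/-- A piece-unifier `(S', H', u)` of a set of atoms `S` with a rule `R`. -/
def IsPieceUnifier (S : Set Atom) (R : Rule) (S' H' : Set Atom) (u : ℕ → Term) : Prop :=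
  Disjoint (varsOf S) (varsOf (R.body ∪ R.head)) ∧
  S'.Nonempty ∧ S' ⊆ S ∧ H' ⊆ R.head ∧
  (∀ x, x ∉ R.frontier ∪ varsOf S' → u x = Term.var x) ∧
  (∀ x ∈ R.frontier ∪ varsOf S', ∃ y ∈ varsOf R.head, u x = Term.var y) ∧
  (∀ x ∈ R.frontier, ∃ y ∈ R.frontier, u x = Term.var y) ∧
  (∀ x ∈ sepVars S' S, ∃ y ∈ R.frontier, u x = Term.var y) ∧
  substSet u S' = substSet u H'

/-- The existential stability property of a piece-unifier of `body R2` with `R1`. -/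
def StableUnifier (R2 R1 : Rule) (B2' : Set Atom) (u : ℕ → Term) : Prop :=
  (∀ x ∈ R2.frontier, u x ∉ Term.var '' R1.exist) ∨ R2.frontier ⊆ varsOf B2'

/-- The existential composition `R2 ∘_μ R1` w.r.t. a piece-unifier `μ = (B2', H1', u)`
of `body R2` with `R1`. -/
def compose (R2 R1 : Rule) (B2' : Set Atom) (u : ℕ → Term) : Rule :=
  if ∀ x ∈ R2.frontier, u x ∉ Term.var '' R1.exist then
    ⟨substSet u R1.body ∪ substSet u (R2.body \ B2'), substSet u R2.head⟩
  else
    ⟨substSet u R1.body ∪ substSet u (R2.body \ B2'),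
     substSet u R1.head ∪ substSet u R2.head⟩

/-- The closure `R*` of a rule set under existential composition. -/
inductive InClosure (𝒮 : Set Rule) : Rule → Prop
  | base {R : Rule} : R ∈ 𝒮 → InClosure 𝒮 R
  | comp {Ri Rj : Rule} {B' H' : Set Atom} {u : ℕ → Term} :
      InClosure 𝒮 Ri → InClosure 𝒮 Rj →
      IsPieceUnifier Ri.body Rj B' H' u → InClosure 𝒮 (compose Ri Rj B' u)

def ruleSet (L : List Rule) : Set Rule := {R | R ∈ L}

/-- The stability property for a (possibly infinite) rule set. -/
def StableSet (𝒮 : Set Rule) : Prop :=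
  ∀ R1 ∈ 𝒮, ∀ R2 ∈ 𝒮, ∀ B2' H1' u,
    IsPieceUnifier R2.body R1 B2' H1' u → StableUnifier R2 R1 B2' u

/-- `J` is a result of one breadth-first chase step of a (possibly infinite) rule set on `I`,
with fresh pairwise-compatible nulls (semi-oblivious naming). -/
def OneStepResult (𝒮 : Set Rule) (I J : Set Atom) : Prop :=
  ∃ ν : Rule → (ℕ → Term) → ℕ → ℕ,
    (∀ R ∈ 𝒮, ∀ f x, Term.var (ν R f x) ∉ termsOf I) ∧
    (∀ R ∈ 𝒮, ∀ R' ∈ 𝒮, ∀ f f' x x', ν R f x = ν R' f' x' →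
        R = R' ∧ restrict f R.frontier = restrict f' R'.frontier ∧ x = x') ∧
    J = I ∪ {a | ∃ R ∈ 𝒮, ∃ π : ℕ → Term, isHom π R.body I ∧
                  a ∈ substSet (safeSub ν R π) R.head}

/-- `I, R ⊨ q` for a Boolean conjunctive query `q` (a set of atoms). -/
def Entails (L : List Rule) (I q : Set Atom) : Prop :=
  ∀ ν, SONaming L ν → ∃ k σ, isHom σ q (chaseF ν L I k)

/-- The null `t` occurs in at least `n` atoms of `S`. -/
def occursInAtLeast (S : Set Atom) (t : Term) (n : ℕ) : Prop :=
  ∃ F : Set Atom, F ⊆ {a | a ∈ S ∧ t ∈ a.terms} ∧ F.Finite ∧ n ≤ F.ncard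

def FrontierGuarded (R : Rule) : Prop := ∃ a ∈ R.body, R.frontier ⊆ a.vars

def IsDatalog (R : Rule) : Prop := R.exist = ∅ ∧ ∃ a, R.head = {a}

end ER
namespace ER

section Aux

-- ===== basic term/atom lemmas =====

lemma mem_termsOf {S : Set Atom} {t : Term} : t ∈ termsOf S ↔ ∃ a ∈ S, t ∈ a.terms := by
  simp [termsOf]

lemma termsOf_mono {S T : Set Atom} (h : S ⊆ T) : termsOf S ⊆ termsOf T := by
  intro t ht
  rw [mem_termsOf] at *
  obtain ⟨a, ha, hta⟩ := ht
  exact ⟨a, h ha, hta⟩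

lemma mem_varsOf {S : Set Atom} {v : ℕ} : v ∈ varsOf S ↔ Term.var v ∈ termsOf S := by
  simp [varsOf, termsOf, Atom.vars, Atom.terms]

lemma Atom.mem_terms_subst {σ : ℕ → Term} {a : Atom} {t : Term} :
    t ∈ (Atom.subst σ a).terms ↔ ∃ s ∈ a.terms, Term.subst σ s = t := by
  simp [Atom.subst, Atom.terms]

lemma Term.subst_subst (σ τ : ℕ → Term) (t : Term) :
    Term.subst σ (Term.subst τ t) = Term.subst (fun v => Term.subst σ (τ v)) t := by
  cases t <;> rfl

lemma Atom.subst_subst (σ τ : ℕ → Term) (a : Atom) :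
    Atom.subst σ (Atom.subst τ a) = Atom.subst (fun v => Term.subst σ (τ v)) a := by
  simp [Atom.subst, List.map_map, Function.comp_def, Term.subst_subst]

lemma Atom.subst_congr {σ τ : ℕ → Term} {a : Atom}
    (h : ∀ t ∈ a.terms, Term.subst σ t = Term.subst τ t) :
    Atom.subst σ a = Atom.subst τ a := by
  simp only [Atom.subst, Atom.mk.injEq, true_and]
  exact List.map_congr_left (fun t ht => h t ht)

lemma Atom.subst_ground {σ : ℕ → Term} {a : Atom} (h : ∀ t ∈ a.terms, t.isConst) :
    Atom.subst σ a = a := by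
  cases a with
  | mk p args =>
    simp only [Atom.subst, Atom.mk.injEq, true_and]
    conv_rhs => rw [← List.map_id args]
    apply List.map_congr_left
    intro t ht
    cases t with
    | const c => rfl
    | var v => exact absurd (h _ ht) (by simp [Term.isConst])

lemma Atom.subst_of_ground_mem {I : Set Atom} (hI : ∀ t ∈ termsOf I, t.isConst)
    {a : Atom} (ha : a ∈ I) (σ : ℕ → Term) : Atom.subst σ a = a :=
  Atom.subst_ground (fun t ht => hI t (mem_termsOf.2 ⟨a, ha, ht⟩))

-- ===== well-formedness lemmas =====

lemma WfRule.body_noconst {R : Rule} (hR : WfRule R) {t : Term}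
    (ht : t ∈ termsOf R.body) : ∃ v, t = Term.var v := by
  cases t with
  | var v => exact ⟨v, rfl⟩
  | const c =>
      exact absurd trivial (hR.2.2.2.2 _ (termsOf_mono Set.subset_union_left ht))

lemma WfRule.head_noconst {R : Rule} (hR : WfRule R) {t : Term}
    (ht : t ∈ termsOf R.head) : ∃ v, t = Term.var v := by
  cases t with
  | var v => exact ⟨v, rfl⟩
  | const c =>
      exact absurd trivial (hR.2.2.2.2 _ (termsOf_mono Set.subset_union_right ht))

lemma head_var_cases {R : Rule} {y : ℕ} (hy : y ∈ varsOf R.head) :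
    y ∈ R.frontier ∨ y ∈ R.exist := by
  by_cases hb : y ∈ varsOf R.body
  · exact Or.inl ⟨hb, hy⟩
  · exact Or.inr ⟨hy, hb⟩

lemma frontier_subset_bodyvars {R : Rule} : R.frontier ⊆ varsOf R.body :=
  fun _ hy => hy.1

lemma body_arg_var {R : Rule} (hR : WfRule R) {b : Atom} (hb : b ∈ R.body) {t : Term}
    (ht : t ∈ b.terms) : ∃ v, t = Term.var v ∧ v ∈ varsOf R.body := by
  obtain ⟨v, rfl⟩ := hR.body_noconst (mem_termsOf.2 ⟨b, hb, ht⟩)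
  exact ⟨v, rfl, mem_varsOf.2 (mem_termsOf.2 ⟨b, hb, ht⟩)⟩

lemma head_arg_var {R : Rule} (hR : WfRule R) {b : Atom} (hb : b ∈ R.head) {t : Term}
    (ht : t ∈ b.terms) : ∃ v, t = Term.var v ∧ v ∈ varsOf R.head := by
  obtain ⟨v, rfl⟩ := hR.head_noconst (mem_termsOf.2 ⟨b, hb, ht⟩)
  exact ⟨v, rfl, mem_varsOf.2 (mem_termsOf.2 ⟨b, hb, ht⟩)⟩

-- ===== restrict / safeSub lemmas =====

lemma restrict_apply_mem {f : ℕ → Term} {F : Set ℕ} {v : ℕ} (h : v ∈ F) :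
    restrict f F v = f v := if_pos h

lemma restrict_apply_not_mem {f : ℕ → Term} {F : Set ℕ} {v : ℕ} (h : v ∉ F) :
    restrict f F v = Term.const 0 := if_neg h

lemma restrict_restrict (f : ℕ → Term) (F : Set ℕ) :
    restrict (restrict f F) F = restrict f F := by
  funext v
  by_cases h : v ∈ F <;> simp [restrict, h]

lemma safeSub_exist {ν : Rule → (ℕ → Term) → ℕ → ℕ} {R : Rule} {π : ℕ → Term} {y : ℕ}
    (h : y ∈ R.exist) :
    safeSub ν R π y = Term.var (ν R (restrict π R.frontier) y) := if_pos h

lemma safeSub_not_exist {ν : Rule → (ℕ → Term) → ℕ → ℕ} {R : Rule} {π : ℕ → Term} {y : ℕ}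
    (h : y ∉ R.exist) : safeSub ν R π y = π y := if_neg h

/-- The head image of a trigger only depends on the frontier restriction. -/
lemma safeSub_head_congr {ν : Rule → (ℕ → Term) → ℕ → ℕ} {R : Rule} {π π' : ℕ → Term}
    (hres : restrict π R.frontier = restrict π' R.frontier) {h : Atom} (hh : h ∈ R.head) :
    Atom.subst (safeSub ν R π) h = Atom.subst (safeSub ν R π') h := by
  apply Atom.subst_congr
  intro t ht
  cases t with
  | const c => rfl
  | var y =>
      have hy : y ∈ varsOf R.head := mem_varsOf.2 (mem_termsOf.2 ⟨h, hh, ht⟩)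
      by_cases hye : y ∈ R.exist
      · simp [Term.subst, safeSub_exist hye, hres]
      · have hyf : y ∈ R.frontier := (head_var_cases hy).resolve_right hye
        have := congrFun hres y
        rw [restrict_apply_mem hyf, restrict_apply_mem hyf] at this
        simp [Term.subst, safeSub_not_exist hye, this]

-- ===== chase basics =====

lemma subset_chaseStep (ν : Rule → (ℕ → Term) → ℕ → ℕ) (L : List Rule) (S : Set Atom) :
    S ⊆ chaseStep ν L S := Set.subset_union_left

lemma chaseStep_mono {ν : Rule → (ℕ → Term) → ℕ → ℕ} {L : List Rule} {S T : Set Atom}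
    (h : S ⊆ T) : chaseStep ν L S ⊆ chaseStep ν L T := by
  intro a ha
  rcases ha with ha | ⟨R, hR, π, hπ, hmem⟩
  · exact Or.inl (h ha)
  · exact Or.inr ⟨R, hR, π, fun b hb => h (hπ hb), hmem⟩

lemma chaseF_mono_step {ν : Rule → (ℕ → Term) → ℕ → ℕ} {L : List Rule} {I : Set Atom}
    (n : ℕ) : chaseF ν L I n ⊆ chaseF ν L I (n + 1) :=
  subset_chaseStep ν L _

lemma chaseF_mono {ν : Rule → (ℕ → Term) → ℕ → ℕ} {L : List Rule} {I : Set Atom}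
    {n m : ℕ} (h : n ≤ m) : chaseF ν L I n ⊆ chaseF ν L I m := by
  induction m with
  | zero => simp_all
  | succ m ih =>
      rcases Nat.lt_or_ge n (m + 1) with h' | h'
      · exact (ih (Nat.lt_succ_iff.1 h')).trans (chaseF_mono_step m)
      · have : n = m + 1 := le_antisymm h h'
        subst this
        exact subset_rfl

lemma chaseF_subset_chaseInf (ν : Rule → (ℕ → Term) → ℕ → ℕ) (L : List Rule)
    (I : Set Atom) (n : ℕ) : chaseF ν L I n ⊆ chaseInf ν L I :=
  Set.subset_iUnion (fun k => chaseF ν L I k) n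

lemma chaseF_base_mono {ν : Rule → (ℕ → Term) → ℕ → ℕ} {L : List Rule} {I J : Set Atom}
    (h : I ⊆ J) (n : ℕ) : chaseF ν L I n ⊆ chaseF ν L J n := by
  induction n with
  | zero => exact h
  | succ n ih => exact chaseStep_mono ih

lemma chaseF_add (ν : Rule → (ℕ → Term) → ℕ → ℕ) (L : List Rule) (I : Set Atom)
    (j n : ℕ) : chaseF ν L I (j + n) = chaseF ν L (chaseF ν L I j) n := by
  induction n with
  | zero => rfl
  | succ n ih => rw [← Nat.add_assoc, chaseF, chaseF, ih]

lemma mem_chaseInf {ν : Rule → (ℕ → Term) → ℕ → ℕ} {L : List Rule} {I : Set Atom}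
    {a : Atom} : a ∈ chaseInf ν L I ↔ ∃ n, a ∈ chaseF ν L I n := by
  simp [chaseInf]

/-- Terms of a freshly produced atom. -/
lemma new_atom_terms {ν : Rule → (ℕ → Term) → ℕ → ℕ} {R : Rule} (hR : WfRule R)
    {π : ℕ → Term} {h : Atom} (hh : h ∈ R.head) {t : Term}
    (ht : t ∈ (Atom.subst (safeSub ν R π) h).terms) :
    (∃ x ∈ R.exist, t = Term.var (ν R (restrict π R.frontier) x)) ∨
    (∃ y ∈ R.frontier, t = π y) := by
  rw [Atom.mem_terms_subst] at ht
  obtain ⟨s, hs, rfl⟩ := ht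
  obtain ⟨y, rfl, hy⟩ := head_arg_var hR hh hs
  by_cases hye : y ∈ R.exist
  · exact Or.inl ⟨y, hye, by simp [Term.subst, safeSub_exist hye]⟩
  · have hyf : y ∈ R.frontier := (head_var_cases hy).resolve_right hye
    exact Or.inr ⟨y, hyf, by simp [Term.subst, safeSub_not_exist hye]⟩

/-- Frontier values of a trigger are terms of the state. -/
lemma frontier_value_mem {π : ℕ → Term} {R : Rule} {S : Set Atom}
    (hπ : isHom π R.body S) {y : ℕ} (hy : y ∈ varsOf R.body) : π y ∈ termsOf S := by
  rw [mem_varsOf, mem_termsOf] at hy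
  obtain ⟨b, hb, hyb⟩ := hy
  refine mem_termsOf.2 ⟨Atom.subst π b, hπ ⟨b, hb, rfl⟩, ?_⟩
  rw [Atom.mem_terms_subst]
  exact ⟨Term.var y, hyb, rfl⟩

/-- Origin of terms in the chase. -/
lemma term_origin {ν : Rule → (ℕ → Term) → ℕ → ℕ} {L : List Rule} (hL : WfList L)
    {I : Set Atom} {n : ℕ} {t : Term} (ht : t ∈ termsOf (chaseF ν L I (n + 1))) :
    t ∈ termsOf (chaseF ν L I n) ∨
    ∃ R ∈ L, ∃ π x, isHom π R.body (chaseF ν L I n) ∧ x ∈ R.exist ∧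
      t = Term.var (ν R (restrict π R.frontier) x) := by
  rw [mem_termsOf] at ht
  obtain ⟨a, ha, hta⟩ := ht
  rcases ha with ha | ⟨R, hR, π, hπ, hmem⟩
  · exact Or.inl (mem_termsOf.2 ⟨a, ha, hta⟩)
  · obtain ⟨h, hh, rfl⟩ := hmem
    rcases new_atom_terms (hL R hR) hh hta with ⟨x, hx, rfl⟩ | ⟨y, hy, rfl⟩
    · exact Or.inr ⟨R, hR, π, x, hπ, hx, rfl⟩
    · exact Or.inl (frontier_value_mem hπ (frontier_subset_bodyvars hy))

/-- Constants in the chase come from the initial set. -/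
lemma const_origin {ν : Rule → (ℕ → Term) → ℕ → ℕ} {L : List Rule} (hL : WfList L)
    {I : Set Atom} {n : ℕ} {c : ℕ} (ht : Term.const c ∈ termsOf (chaseF ν L I n)) :
    Term.const c ∈ termsOf I := by
  induction n with
  | zero => exact ht
  | succ n ih =>
      rcases term_origin hL ht with h | ⟨R, _, π, x, _, _, heq⟩
      · exact ih h
      · exact absurd heq (by simp)

/-- If a null is present, its trigger has fired, and all of its atoms are present. -/
lemma null_fired {ν : Rule → (ℕ → Term) → ℕ → ℕ} {L : List Rule} (hL : WfList L)
    (hν : SONaming L ν) {I : Set Atom} {n : ℕ} {R : Rule} (hR : R ∈ L) {ρ : ℕ → Term}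
    {x : ℕ} (ht : Term.var (ν R (restrict ρ R.frontier) x) ∈ termsOf (chaseF ν L I n)) :
    Term.var (ν R (restrict ρ R.frontier) x) ∈ termsOf I ∨
    ∃ m < n, ∃ π, isHom π R.body (chaseF ν L I m) ∧
      restrict π R.frontier = restrict ρ R.frontier := by
  induction n with
  | zero => exact Or.inl ht
  | succ n ih =>
      rcases term_origin hL ht with h | ⟨R', hR', π, x', hπ, _, heq⟩
      · rcases ih h with h' | ⟨m, hm, π, hπ, hres⟩
        · exact Or.inl h'
        · exact Or.inr ⟨m, hm.trans (Nat.lt_succ_self n), π, hπ, hres⟩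
      · have heq' := Term.var.inj heq
        obtain ⟨hRR, hres, _⟩ := hν.2 R hR R' hR' _ _ _ _ heq'
        subst hRR
        rw [restrict_restrict, restrict_restrict] at hres
        exact Or.inr ⟨n, Nat.lt_succ_self n, π, hπ, hres.symm⟩

end Aux

section Fin

lemma Atom.terms_finite (a : Atom) : a.terms.Finite := a.args.finite_toSet

lemma termsOf_finite {S : Set Atom} (hS : S.Finite) : (termsOf S).Finite :=
  Set.Finite.biUnion hS (fun a _ => a.terms_finite)

lemma Atom.vars_finite (a : Atom) : a.vars.Finite := by
  have : a.vars = Term.var ⁻¹' a.terms := rfl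
  rw [this]
  exact Set.Finite.preimage (fun x _ y _ h => Term.var.inj h) a.terms_finite

lemma varsOf_finite {S : Set Atom} (hS : S.Finite) : (varsOf S).Finite :=
  Set.Finite.biUnion hS (fun a _ => a.vars_finite)

lemma frontier_finite {R : Rule} (hR : WfRule R) : R.frontier.Finite :=
  Set.Finite.subset (varsOf_finite hR.1) Set.inter_subset_left

lemma restrictedMaps_finite {F : Set ℕ} (hF : F.Finite) {T : Set Term} (hT : T.Finite) :
    {g : ℕ → Term | (∀ v ∈ F, g v ∈ T) ∧ g = restrict g F}.Finite := by
  haveI := hF.to_subtype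
  have hpi : {φ : F → Term | ∀ d : F, φ d ∈ T}.Finite := by
    have : {φ : F → Term | ∀ d : F, φ d ∈ T} = Set.pi Set.univ (fun _ => T) := by
      ext φ; simp [Set.mem_pi]
    rw [this]
    exact Set.Finite.pi (fun _ => hT)
  have himg := hpi.image
    (fun (φ : F → Term) => (fun v => if h : v ∈ F then φ ⟨v, h⟩ else Term.const 0 : ℕ → Term))
  apply himg.subset
  rintro g ⟨hval, hres⟩
  refine ⟨fun d => g d, fun d => hval d d.2, ?_⟩
  funext v
  by_cases h : v ∈ F
  · simp [h]
  · simp only [h, dif_neg, not_false_iff]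
    conv_rhs => rw [hres]
    simp [restrict, h]

lemma chaseStep_finite {ν : Rule → (ℕ → Term) → ℕ → ℕ} {L : List Rule} (hL : WfList L)
    {S : Set Atom} (hS : S.Finite) : (chaseStep ν L S).Finite := by
  apply Set.Finite.union hS
  have hb : {a | ∃ R ∈ L, ∃ π : ℕ → Term, isHom π R.body S ∧
      a ∈ substSet (safeSub ν R π) R.head} ⊆
      ⋃ R ∈ {R | R ∈ L}, ⋃ h ∈ R.head,
        (fun g => Atom.subst (safeSub ν R g) h) ''
          {g : ℕ → Term | (∀ v ∈ R.frontier, g v ∈ termsOf S) ∧ g = restrict g R.frontier} := by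
    rintro a ⟨R, hR, π, hπ, h, hh, rfl⟩
    refine Set.mem_biUnion hR (Set.mem_biUnion hh ?_)
    refine ⟨restrict π R.frontier, ⟨?_, (restrict_restrict π R.frontier).symm⟩, ?_⟩
    · intro v hv
      rw [restrict_apply_mem hv]
      exact frontier_value_mem hπ (frontier_subset_bodyvars hv)
    · exact safeSub_head_congr (restrict_restrict π R.frontier) hh
  apply Set.Finite.subset _ hb
  apply Set.Finite.biUnion L.finite_toSet
  intro R hR
  apply Set.Finite.biUnion (hL R hR).2.1
  intro h _
  exact Set.Finite.image _ ((restrictedMaps_finite (frontier_finite (hL R hR))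
    (termsOf_finite hS)).subset (fun g hg => hg))

lemma chaseF_finite {ν : Rule → (ℕ → Term) → ℕ → ℕ} {L : List Rule} (hL : WfList L)
    {I : Set Atom} (hI : I.Finite) (n : ℕ) : (chaseF ν L I n).Finite := by
  induction n with
  | zero => exact hI
  | succ n ih => exact chaseStep_finite hL ih

lemma finite_subset_chaseF {ν : Rule → (ℕ → Term) → ℕ → ℕ} {L : List Rule} {I : Set Atom}
    {A : Set Atom} (hA : A.Finite) :
    A ⊆ chaseInf ν L I → ∃ k, A ⊆ chaseF ν L I k := by
  refine Set.Finite.induction_on (motive := fun A _ => A ⊆ chaseInf ν L I → ∃ k, A ⊆ chaseF ν L I k) A hA (fun _ => ⟨0, by simp⟩) ?_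
  intro a s ha hs ih hsub
  obtain ⟨k, hk⟩ := ih (fun x hx => hsub (Set.mem_insert_of_mem _ hx))
  obtain ⟨m, hm⟩ := mem_chaseInf.1 (hsub (Set.mem_insert _ _))
  exact ⟨max k m, Set.insert_subset (chaseF_mono (le_max_right k m) hm)
    (hk.trans (chaseF_mono (le_max_left k m)))⟩

lemma injOn_atom_of_injOn_terms {σ : ℕ → Term} {A : Set Atom}
    (hinj : Set.InjOn (Term.subst σ) (termsOf A)) : Set.InjOn (Atom.subst σ) A := by
  intro a ha b hb heq
  have hp : a.pred = b.pred := by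
    have := congrArg Atom.pred heq; simpa [Atom.subst] using this
  have hargs : a.args.map (Term.subst σ) = b.args.map (Term.subst σ) := by
    have := congrArg Atom.args heq; simpa [Atom.subst] using this
  have hlen : a.args.length = b.args.length := by
    have := congrArg List.length hargs; simpa using this
  have hargs2 : a.args = b.args := by
    apply List.ext_getElem hlen
    intro i h₁ h₂
    have e1 : Term.subst σ a.args[i] = Term.subst σ b.args[i] := by
      have g1 := List.getElem_map (Term.subst σ) (l := a.args) (h := by simpa using h₁)
      have g2 := List.getElem_map (Term.subst σ) (l := b.args) (h := by simpa using h₂)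
      rw [← g1, ← g2]
      simp [hargs]
    exact hinj (mem_termsOf.2 ⟨a, ha, by simpa [Atom.terms] using List.getElem_mem h₁⟩)
      (mem_termsOf.2 ⟨b, hb, by simpa [Atom.terms] using List.getElem_mem h₂⟩) e1
  cases a; cases b
  simp_all

lemma finite_of_injhom {σ : ℕ → Term} {A B : Set Atom} (hB : B.Finite)
    (hσ : isInjHom σ A B) : A.Finite := by
  have hinj : Set.InjOn (Atom.subst σ) A := injOn_atom_of_injOn_terms hσ.2
  exact Set.Finite.of_finite_image (hB.subset hσ.1) hinj

end Fin

section Naming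

noncomputable instance : DecidableEq Rule := Classical.decEq _

def termCode : Term → ℕ
  | .const c => 2 * c
  | .var v => 2 * v + 1

lemma termCode_inj : Function.Injective termCode := by
  intro s t h
  cases s with
  | const c => cases t with
    | const c' => simp only [termCode] at h; exact congrArg Term.const (by omega)
    | var v => simp only [termCode] at h; exact absurd h (by omega)
  | var v => cases t with
    | const c' => simp only [termCode] at h; exact absurd h (by omega)
    | var v' => simp only [termCode] at h; exact congrArg Term.var (by omega)

noncomputable def frontFinset (R : Rule) : Finset ℕ :=
  if h : R.frontier.Finite then h.toFinset else ∅

lemma mem_frontFinset {R : Rule} (hR : WfRule R) {v : ℕ} :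
    v ∈ frontFinset R ↔ v ∈ R.frontier := by
  have h := frontier_finite hR
  simp [frontFinset, dif_pos h, Set.Finite.mem_toFinset]

/-- A canonical semi-oblivious naming for any well-formed rule list. -/
noncomputable def canonNaming (L : List Rule) : Rule → (ℕ → Term) → ℕ → ℕ :=
  fun R f x => Nat.pair (L.idxOf R)
    (Nat.pair (Encodable.encode (((frontFinset R).sort (· ≤ ·)).map (fun v => termCode (f v)))) x)

lemma canonNaming_spec {L : List Rule} (hL : WfList L) : SONaming L (canonNaming L) := by
  constructor
  · intro R hR f g hfg
    funext x
    have hv : ∀ v ∈ (frontFinset R).sort (· ≤ ·), termCode (f v) = termCode (g v) := by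
      intro v hv
      have hvf : v ∈ R.frontier := (mem_frontFinset (hL R hR)).1 (by simpa using hv)
      have := congrFun hfg v
      rw [restrict_apply_mem hvf, restrict_apply_mem hvf] at this
      rw [this]
    simp only [canonNaming]
    rw [List.map_congr_left hv]
  · intro R hR R' hR' f f' x x' heq
    simp only [canonNaming] at heq
    have h1 := Nat.pair_eq_pair.1 heq
    have h2 := Nat.pair_eq_pair.1 h1.2
    have hRR : R = R' := by
      have hl : L.idxOf R < L.length := List.idxOf_lt_length_iff.2 hR
      have hl' : L.idxOf R' < L.length := List.idxOf_lt_length_iff.2 hR'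
      have e1 : L[L.idxOf R]'hl = R := List.getElem_idxOf hl
      have e2 : L[L.idxOf R']'hl' = R' := List.getElem_idxOf hl'
      have e3 : L[L.idxOf R]'hl = L[L.idxOf R']'hl' := by simp only [h1.1]
      rw [e1, e2] at e3
      exact e3
    subst hRR
    refine ⟨rfl, ?_, h2.2⟩
    have hmap := Encodable.encode_injective h2.1
    rw [List.map_inj_left] at hmap
    funext v
    by_cases hv : v ∈ R.frontier
    · rw [restrict_apply_mem hv, restrict_apply_mem hv]
      exact termCode_inj (hmap v (by rw [Finset.mem_sort]; exact (mem_frontFinset (hL R hR)).2 hv))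
    · rw [restrict_apply_not_mem hv, restrict_apply_not_mem hv]

end Naming

section Sim

/-- Map a term-function over an atom. -/
def mapAtom (g : Term → Term) (a : Atom) : Atom := ⟨a.pred, a.args.map g⟩

lemma mem_terms_mapAtom {g : Term → Term} {a : Atom} {t : Term} :
    t ∈ (mapAtom g a).terms ↔ ∃ s ∈ a.terms, g s = t := by
  simp [mapAtom, Atom.terms]

lemma mapAtom_congr {g g' : Term → Term} {a : Atom}
    (h : ∀ t ∈ a.terms, g t = g' t) : mapAtom g a = mapAtom g' a := by
  simp only [mapAtom, Atom.mk.injEq, true_and]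
  exact List.map_congr_left (fun t ht => h t ht)

lemma mapAtom_subst_vars {g : Term → Term} {π : ℕ → Term} {b : Atom}
    (hb : ∀ t ∈ b.terms, ∃ v, t = Term.var v) :
    mapAtom g (Atom.subst π b) = Atom.subst (fun v => g (π v)) b := by
  cases b with
  | mk p args =>
      simp only [mapAtom, Atom.subst, List.map_map, Atom.mk.injEq, true_and]
      apply List.map_congr_left
      intro t ht
      obtain ⟨v, rfl⟩ := hb t ht
      rfl

lemma mapAtom_ground {g : Term → Term} {a : Atom}
    (h : ∀ t ∈ a.terms, g t = t) : mapAtom g a = a := by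
  cases a with
  | mk p args =>
      simp only [mapAtom, Atom.mk.injEq, true_and]
      conv_rhs => rw [← List.map_id args]
      exact List.map_congr_left (fun t ht => h t ht)

/-- A term is a coded null of the naming `ν₁` for `L`. -/
def IsCode (ν₁ : Rule → (ℕ → Term) → ℕ → ℕ) (L : List Rule) (t : Term) : Prop :=
  ∃ R f x, R ∈ L ∧ f = restrict f R.frontier ∧ t = Term.var (ν₁ R f x)

noncomputable def codeTriple (ν₁ : Rule → (ℕ → Term) → ℕ → ℕ) (L : List Rule)
    (t : Term) : Rule × (ℕ → Term) × ℕ :=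
  if h : IsCode ν₁ L t then
    (h.choose, h.choose_spec.choose, h.choose_spec.choose_spec.choose)
  else (⟨∅, ∅⟩, fun _ => Term.const 0, 0)

lemma codeTriple_spec {ν₁ : Rule → (ℕ → Term) → ℕ → ℕ} {L : List Rule} {t : Term}
    (h : IsCode ν₁ L t) :
    (codeTriple ν₁ L t).1 ∈ L ∧
    (codeTriple ν₁ L t).2.1 = restrict (codeTriple ν₁ L t).2.1 (codeTriple ν₁ L t).1.frontier ∧
    t = Term.var (ν₁ (codeTriple ν₁ L t).1 (codeTriple ν₁ L t).2.1 (codeTriple ν₁ L t).2.2) := by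
  simp only [codeTriple, dif_pos h]
  exact h.choose_spec.choose_spec.choose_spec

lemma codeTriple_unique {ν₁ : Rule → (ℕ → Term) → ℕ → ℕ} {L : List Rule}
    (hν₁ : SONaming L ν₁) {R : Rule} {f : ℕ → Term} {x : ℕ} (hR : R ∈ L)
    (hf : f = restrict f R.frontier) :
    (codeTriple ν₁ L (Term.var (ν₁ R f x))).1 = R ∧
    (codeTriple ν₁ L (Term.var (ν₁ R f x))).2.1 = f ∧
    (codeTriple ν₁ L (Term.var (ν₁ R f x))).2.2 = x := by
  have hc : IsCode ν₁ L (Term.var (ν₁ R f x)) := ⟨R, f, x, hR, hf, rfl⟩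
  obtain ⟨h1, h2, h3⟩ := codeTriple_spec hc
  obtain ⟨hRR, hre, hxx⟩ := hν₁.2 _ h1 R hR _ _ _ _ (Term.var.inj h3).symm
  refine ⟨hRR, ?_, hxx⟩
  rw [h2, hre]
  exact hf.symm

/-- The recursive translation of terms along a change of base/naming. -/
noncomputable def delta (ν₁ ν₂ : Rule → (ℕ → Term) → ℕ → ℕ) (L : List Rule)
    (B : Set Term) (β : Term → Term) : ℕ → Term → Term
  | 0, t => β t
  | n + 1, t =>
      if t ∈ B then β t
      else if IsCode ν₁ L t then
        Term.var (ν₂ (codeTriple ν₁ L t).1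
          (restrict (fun v => delta ν₁ ν₂ L B β n ((codeTriple ν₁ L t).2.1 v))
            (codeTriple ν₁ L t).1.frontier)
          (codeTriple ν₁ L t).2.2)
      else β t

lemma delta_mem_base {ν₁ ν₂ : Rule → (ℕ → Term) → ℕ → ℕ} {L : List Rule}
    {B : Set Term} {β : Term → Term} (n : ℕ) {t : Term} (h : t ∈ B) :
    delta ν₁ ν₂ L B β n t = β t := by
  cases n with
  | zero => rfl
  | succ n => simp only [delta, if_pos h]

lemma delta_const {ν₁ ν₂ : Rule → (ℕ → Term) → ℕ → ℕ} {L : List Rule}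
    {B : Set Term} {β : Term → Term} (n : ℕ) (c : ℕ) :
    delta ν₁ ν₂ L B β n (Term.const c) = β (Term.const c) := by
  cases n with
  | zero => rfl
  | succ n =>
      simp only [delta]
      by_cases hB : Term.const c ∈ B
      · rw [if_pos hB]
      · rw [if_neg hB, if_neg]
        rintro ⟨R, f, x, -, -, h⟩
        exact Term.noConfusion h

lemma delta_code {ν₁ ν₂ : Rule → (ℕ → Term) → ℕ → ℕ} {L : List Rule}
    (hν₁ : SONaming L ν₁) {B : Set Term} {β : Term → Term} {n : ℕ} {R : Rule}
    {f : ℕ → Term} {x : ℕ} (hR : R ∈ L) (hf : f = restrict f R.frontier)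
    (hB : Term.var (ν₁ R f x) ∉ B) :
    delta ν₁ ν₂ L B β (n + 1) (Term.var (ν₁ R f x)) =
      Term.var (ν₂ R (restrict (fun v => delta ν₁ ν₂ L B β n (f v)) R.frontier) x) := by
  have hc : IsCode ν₁ L (Term.var (ν₁ R f x)) := ⟨R, f, x, hR, hf, rfl⟩
  obtain ⟨e1, e2, e3⟩ := codeTriple_unique hν₁ hR hf (x := x)
  simp only [delta, if_neg hB, if_pos hc, e1, e2, e3]

/-- Coherence: the translation stabilises on terms of the chase. -/
lemma delta_coh {ν₁ ν₂ : Rule → (ℕ → Term) → ℕ → ℕ} {L : List Rule} (hL : WfList L)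
    (hν₁ : SONaming L ν₁) {S₀ : Set Atom} (β : Term → Term) :
    ∀ n, ∀ t ∈ termsOf (chaseF ν₁ L S₀ n), ∀ m, n ≤ m →
      delta ν₁ ν₂ L (termsOf S₀) β m t = delta ν₁ ν₂ L (termsOf S₀) β n t := by
  intro n
  induction n using Nat.strong_induction_on with
  | _ n ih =>
      intro t ht m hnm
      by_cases hB : t ∈ termsOf S₀
      · rw [delta_mem_base m hB, delta_mem_base n hB]
      cases t with
      | const c => rw [delta_const, delta_const]
      | var u =>
          cases n with
          | zero => exact absurd ht hB
          | succ n' =>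
              rcases term_origin hL ht with hold | ⟨R, hR, π, x, hπ, hx, heq⟩
              · have h1 := ih n' (Nat.lt_succ_self n') _ hold m
                  (le_trans (Nat.le_succ n') hnm)
                have h2 := ih n' (Nat.lt_succ_self n') _ hold (n' + 1) (Nat.le_succ n')
                rw [h1, h2]
              · have hu := Term.var.inj heq
                subst hu
                cases m with
                | zero => omega
                | succ m' =>
                    have hm' : n' ≤ m' := Nat.succ_le_succ_iff.1 hnm
                    rw [delta_code hν₁ hR (restrict_restrict π R.frontier).symm hB,
                        delta_code hν₁ hR (restrict_restrict π R.frontier).symm hB]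
                    have hre : restrict (fun v => delta ν₁ ν₂ L (termsOf S₀) β m'
                        ((restrict π R.frontier) v)) R.frontier =
                        restrict (fun v => delta ν₁ ν₂ L (termsOf S₀) β n'
                        ((restrict π R.frontier) v)) R.frontier := by
                      funext v
                      by_cases hv : v ∈ R.frontier
                      · simp only [restrict_apply_mem hv]
                        have hmem : π v ∈ termsOf (chaseF ν₁ L S₀ n') :=
                          frontier_value_mem hπ (frontier_subset_bodyvars hv)
                        rw [ih n' (Nat.lt_succ_self n') _ hmem m' hm']
                      · rw [restrict_apply_not_mem hv, restrict_apply_not_mem hv]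
                    rw [hre]

/-- The main simulation lemma: a base translation lifts to the whole chase. -/
lemma sim_main {ν₁ ν₂ : Rule → (ℕ → Term) → ℕ → ℕ} {L : List Rule} (hL : WfList L)
    (hν₁ : SONaming L ν₁) {S₀ T₀ : Set Atom} (β : Term → Term) {j : ℕ}
    (H1 : ∀ a ∈ S₀, mapAtom β a ∈ chaseF ν₂ L T₀ j)
    (H2 : ∀ R ∈ L, ∀ (π : ℕ → Term) (x n : ℕ), x ∈ R.exist →
        isHom π R.body (chaseF ν₁ L S₀ n) →
        Term.var (ν₁ R (restrict π R.frontier) x) ∈ termsOf S₀ →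
        substSet (safeSub ν₁ R π) R.head ⊆ S₀) :
    ∀ n, ∀ a ∈ chaseF ν₁ L S₀ n,
      mapAtom (delta ν₁ ν₂ L (termsOf S₀) β n) a ∈ chaseF ν₂ L T₀ (j + n) := by
  intro n
  induction n with
  | zero => exact fun a ha => H1 a ha
  | succ n ih =>
      intro a ha
      rcases ha with hold | ⟨R, hR, π, hπ, hmem⟩
      · have hco : mapAtom (delta ν₁ ν₂ L (termsOf S₀) β (n + 1)) a =
            mapAtom (delta ν₁ ν₂ L (termsOf S₀) β n) a :=
          mapAtom_congr (fun t ht =>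
            delta_coh hL hν₁ β n t (mem_termsOf.2 ⟨a, hold, ht⟩) (n + 1) (Nat.le_succ n))
        rw [hco]
        exact chaseF_mono_step _ (ih a hold)
      · obtain ⟨h, hh, rfl⟩ := hmem
        by_cases hS : ∃ x ∈ R.exist,
            Term.var (ν₁ R (restrict π R.frontier) x) ∈ termsOf S₀
        · obtain ⟨x, hx, hxS⟩ := hS
          have haS : Atom.subst (safeSub ν₁ R π) h ∈ S₀ :=
            H2 R hR π x n hx hπ hxS ⟨h, hh, rfl⟩
          have hco : mapAtom (delta ν₁ ν₂ L (termsOf S₀) β (n + 1))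
              (Atom.subst (safeSub ν₁ R π) h) = mapAtom β (Atom.subst (safeSub ν₁ R π) h) :=
            mapAtom_congr (fun t ht =>
              delta_mem_base (n + 1) (mem_termsOf.2 ⟨_, haS, ht⟩))
          rw [hco]
          exact chaseF_mono (Nat.le_add_right j (n + 1)) (H1 _ haS)
        · push_neg at hS
          have hhom : isHom (fun v => delta ν₁ ν₂ L (termsOf S₀) β n (π v)) R.body
              (chaseF ν₂ L T₀ (j + n)) := by
            rintro b ⟨b₀, hb₀, rfl⟩
            have he : Atom.subst (fun v => delta ν₁ ν₂ L (termsOf S₀) β n (π v)) b₀ =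
                mapAtom (delta ν₁ ν₂ L (termsOf S₀) β n) (Atom.subst π b₀) :=
              (mapAtom_subst_vars (fun t ht =>
                (hL R hR).body_noconst (mem_termsOf.2 ⟨b₀, hb₀, ht⟩))).symm
            rw [he]
            exact ih _ (hπ ⟨b₀, hb₀, rfl⟩)
          have hkey : mapAtom (delta ν₁ ν₂ L (termsOf S₀) β (n + 1))
              (Atom.subst (safeSub ν₁ R π) h) =
              Atom.subst (safeSub ν₂ R (fun v => delta ν₁ ν₂ L (termsOf S₀) β n (π v))) h := by
            rw [mapAtom_subst_vars (fun t ht =>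
              (hL R hR).head_noconst (mem_termsOf.2 ⟨h, hh, ht⟩))]
            apply Atom.subst_congr
            intro t ht
            obtain ⟨y, rfl⟩ := (hL R hR).head_noconst (mem_termsOf.2 ⟨h, hh, ht⟩)
            have hy : y ∈ varsOf R.head := mem_varsOf.2 (mem_termsOf.2 ⟨h, hh, ht⟩)
            simp only [Term.subst]
            by_cases hye : y ∈ R.exist
            · rw [safeSub_exist hye, safeSub_exist hye,
                delta_code hν₁ hR (restrict_restrict π R.frontier).symm (hS y hye)]
              have hre : restrict (fun v => delta ν₁ ν₂ L (termsOf S₀) β n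
                  ((restrict π R.frontier) v)) R.frontier =
                  restrict (fun v => delta ν₁ ν₂ L (termsOf S₀) β n (π v)) R.frontier := by
                funext v
                by_cases hv : v ∈ R.frontier
                · simp only [restrict_apply_mem hv]
                · rw [restrict_apply_not_mem hv, restrict_apply_not_mem hv]
              rw [hre]
            · rw [safeSub_not_exist hye, safeSub_not_exist hye]
              have hyf : y ∈ R.frontier := (head_var_cases hy).resolve_right hye
              exact delta_coh hL hν₁ β n _
                (frontier_value_mem hπ (frontier_subset_bodyvars hyf)) (n + 1) (Nat.le_succ n)
          rw [hkey]
          exact Or.inr ⟨R, hR, _, hhom, ⟨h, hh, rfl⟩⟩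

end Sim

section Catchup

lemma not_var_mem_ground {I : Set Atom} (hg : ∀ t ∈ termsOf I, t.isConst) (u : ℕ) :
    Term.var u ∉ termsOf I := fun h => hg _ h

lemma not_exist_of_bodyvar {R : Rule} {y : ℕ} (h : y ∈ varsOf R.body) : y ∉ R.exist :=
  fun he => he.2 h

lemma exists_uniform_bound {α : Type*} (l : List α) (P : α → ℕ → Prop)
    (hmono : ∀ a k k', k ≤ k' → P a k → P a k')
    (h : ∀ a ∈ l, ∃ k, P a k) : ∃ K, ∀ a ∈ l, P a K := by
  induction l with
  | nil => exact ⟨0, by simp⟩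
  | cons a l ih =>
      obtain ⟨K, hK⟩ := ih (fun b hb => h b (List.mem_cons_of_mem a hb))
      obtain ⟨k, hk⟩ := h a List.mem_cons_self
      refine ⟨max k K, fun b hb => ?_⟩
      rcases List.mem_cons.1 hb with rfl | hb
      · exact hmono _ _ _ (le_max_left _ _) hk
      · exact hmono _ _ _ (le_max_right _ _) (hK b hb)

/-- The frozen canonical instance of the body of a rule. -/
def czSub : ℕ → Term := fun v => Term.const (v + 1)

def Ic (R' : Rule) : Set Atom := substSet czSub R'.body

lemma Ic_instance {R' : Rule} (hR' : WfRule R') : IsInstance (Ic R') := by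
  constructor
  · exact hR'.1.image _
  · intro t ht
    rw [mem_termsOf] at ht
    obtain ⟨a, ⟨b, hb, rfl⟩, hta⟩ := ht
    rw [Atom.mem_terms_subst] at hta
    obtain ⟨s, hs, rfl⟩ := hta
    obtain ⟨v, rfl⟩ := hR'.body_noconst (mem_termsOf.2 ⟨b, hb, hs⟩)
    trivial

/-- Lemma W: the heads of the parallelising rules are uniformly reachable. -/
lemma lemma_W {L L' : List Rule} (hL : WfList L) (hL' : WfList L')
    (hpar : Parallelises L' L) (ν₀ ν'₀ : Rule → (ℕ → Term) → ℕ → ℕ)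
    (hν₀ : SONaming L ν₀) (hν'₀ : SONaming L' ν'₀) :
    ∃ K : ℕ, ∀ (ν : Rule → (ℕ → Term) → ℕ → ℕ), SONaming L ν →
      ∀ J, IsInstance J → ∀ R' ∈ L', ∀ ρ : ℕ → Term, isHom ρ R'.body J →
        ∃ w : ℕ → Term, (∀ y ∈ R'.frontier, w y = ρ y) ∧
          substSet w R'.head ⊆ chaseF ν L J K := by
  have hstep : ∀ R' ∈ L', ∃ k, ∃ w₀ : ℕ → Term,
      (∀ y ∈ R'.frontier, w₀ y = Term.const (y + 1)) ∧
      substSet w₀ R'.head ⊆ chaseF ν₀ L (Ic R') k := by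
    intro R' hR'
    have hInst : IsInstance (Ic R') := Ic_instance (hL' R' hR')
    obtain ⟨σ', hσ'⟩ := (hpar ν₀ ν'₀ hν₀ hν'₀ (Ic R') hInst).2
    set w₀ : ℕ → Term := fun v => Term.subst σ' (safeSub ν'₀ R' czSub v) with hw₀
    have hblock : ∀ h ∈ R'.head,
        Atom.subst (safeSub ν'₀ R' czSub) h ∈ chaseF ν'₀ L' (Ic R') 1 := by
      intro h hh
      exact Or.inr ⟨R', hR', czSub, fun b hb => hb, ⟨h, hh, rfl⟩⟩
    have hsub : substSet w₀ R'.head ⊆ chaseInf ν₀ L (Ic R') := by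
      rintro a ⟨h, hh, rfl⟩
      have : Atom.subst w₀ h = Atom.subst σ' (Atom.subst (safeSub ν'₀ R' czSub) h) :=
        (Atom.subst_subst σ' (safeSub ν'₀ R' czSub) h).symm
      rw [this]
      exact hσ' ⟨_, hblock h hh, rfl⟩
    obtain ⟨k, hk⟩ := finite_subset_chaseF ((hL' R' hR').2.1.image _) hsub
    refine ⟨k, w₀, ?_, hk⟩
    intro y hy
    have hyb : y ∉ R'.exist := not_exist_of_bodyvar (frontier_subset_bodyvars hy)
    rw [hw₀]
    simp only [safeSub_not_exist hyb]
    rfl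
  obtain ⟨K, hK⟩ := exists_uniform_bound L'
    (fun R' k => ∃ w₀ : ℕ → Term, (∀ y ∈ R'.frontier, w₀ y = Term.const (y + 1)) ∧
      substSet w₀ R'.head ⊆ chaseF ν₀ L (Ic R') k)
    (fun R' k k' hkk ⟨w₀, h1, h2⟩ => ⟨w₀, h1, h2.trans (chaseF_mono hkk)⟩) hstep
  refine ⟨K, ?_⟩
  intro ν hν J hJ R' hR' ρ hρ
  obtain ⟨w₀, hw₀f, hw₀s⟩ := hK R' hR'
  -- base translation: the canonical constant v+1 goes to ρ v
  set β : Term → Term := fun t => match t with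
    | .const (v + 1) => ρ v
    | t => t with hβ
  have hβc : ∀ v, β (Term.const (v + 1)) = ρ v := fun v => rfl
  have hground : ∀ t ∈ termsOf (Ic R'), t.isConst := (Ic_instance (hL' R' hR')).2
  have H1 : ∀ a ∈ Ic R', mapAtom β a ∈ chaseF ν L J 0 := by
    rintro a ⟨b, hb, rfl⟩
    have he : mapAtom β (Atom.subst czSub b) = Atom.subst (fun v => β (czSub v)) b :=
      mapAtom_subst_vars (fun t ht => by
        obtain ⟨v, hv, _⟩ := body_arg_var (hL' R' hR') hb ht
        exact ⟨v, hv⟩)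
    rw [he]
    have : (fun v => β (czSub v)) = ρ := funext (fun v => hβc v)
    rw [this]
    exact hρ ⟨b, hb, rfl⟩
  have H2 : ∀ R ∈ L, ∀ (π : ℕ → Term) (x n : ℕ), x ∈ R.exist →
      isHom π R.body (chaseF ν₀ L (Ic R') n) →
      Term.var (ν₀ R (restrict π R.frontier) x) ∈ termsOf (Ic R') →
      substSet (safeSub ν₀ R π) R.head ⊆ Ic R' := by
    intro R _ π x n _ _ hvar
    exact absurd hvar (not_var_mem_ground hground _)
  have hsim := sim_main hL hν₀ β H1 H2 (ν₂ := ν) (T₀ := J)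
  set D := delta ν₀ ν L (termsOf (Ic R')) β K with hD
  refine ⟨fun v => D (w₀ v), ?_, ?_⟩
  · intro y hy
    show D (w₀ y) = ρ y
    rw [hw₀f y hy, hD, delta_const]
  · rintro a ⟨h, hh, rfl⟩
    have he : Atom.subst (fun v => D (w₀ v)) h = mapAtom D (Atom.subst w₀ h) :=
      (mapAtom_subst_vars (fun t ht => by
        obtain ⟨v, hv, _⟩ := head_arg_var (hL' R' hR') hh ht
        exact ⟨v, hv⟩)).symm
    rw [he]
    have := hsim K _ (hw₀s ⟨h, hh, rfl⟩)
    rwa [Nat.zero_add] at this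

/-- From the parallelisation hypothesis: every chase atom has a homomorphic image
in a uniformly bounded prefix of the chase. -/
lemma catchup {L L' : List Rule} (hL : WfList L) (hL' : WfList L')
    (hpar : Parallelises L' L) (ν₀ ν'₀ : Rule → (ℕ → Term) → ℕ → ℕ)
    (hν₀ : SONaming L ν₀) (hν'₀ : SONaming L' ν'₀) :
    ∃ K : ℕ, ∀ (ν : Rule → (ℕ → Term) → ℕ → ℕ), SONaming L ν →
      ∀ J, IsInstance J → ∃ σc : ℕ → Term,
        ∀ a ∈ chaseInf ν L J, Atom.subst σc a ∈ chaseF ν L J K := by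
  obtain ⟨K, hW⟩ := lemma_W hL hL' hpar ν₀ ν'₀ hν₀ hν'₀
  refine ⟨K, ?_⟩
  intro ν hν J hJ
  obtain ⟨σ, hσhom, _⟩ := (hpar ν ν'₀ hν hν'₀ J hJ).1
  -- choice of a uniform head image for each (rule, frontier map)
  have hchoice : ∀ (R' : Rule) (f : ℕ → Term), ∃ w : ℕ → Term,
      R' ∈ L' → (∃ ρ, isHom ρ R'.body J ∧ restrict ρ R'.frontier = f) →
      ((∀ y ∈ R'.frontier, w y = f y) ∧ substSet w R'.head ⊆ chaseF ν L J K) := by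
    intro R' f
    by_cases hex : R' ∈ L' ∧ ∃ ρ, isHom ρ R'.body J ∧ restrict ρ R'.frontier = f
    · obtain ⟨hR', ρ, hρ, hre⟩ := hex
      obtain ⟨w, hw1, hw2⟩ := hW ν hν J hJ R' hR' ρ hρ
      refine ⟨w, fun _ _ => ⟨?_, hw2⟩⟩
      intro y hy
      rw [hw1 y hy, ← hre, restrict_apply_mem hy]
    · refine ⟨fun _ => Term.const 0, fun h1 h2 => absurd ⟨h1, h2⟩ hex⟩
  choose W hWspec using hchoice
  -- the substitution collapsing one parallel step into K chase steps
  set σs : ℕ → Term := fun m =>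
    if hc : IsCode ν'₀ L' (Term.var m) then
      W (codeTriple ν'₀ L' (Term.var m)).1 (codeTriple ν'₀ L' (Term.var m)).2.1
        (codeTriple ν'₀ L' (Term.var m)).2.2
    else Term.var m with hσs
  have heval : ∀ (R' : Rule) (f : ℕ → Term) (x : ℕ), R' ∈ L' →
      f = restrict f R'.frontier → σs (ν'₀ R' f x) = W R' f x := by
    intro R' f x hR' hf
    have hc : IsCode ν'₀ L' (Term.var (ν'₀ R' f x)) := ⟨R', f, x, hR', hf, rfl⟩
    obtain ⟨e1, e2, e3⟩ := codeTriple_unique hν'₀ hR' hf (x := x)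
    rw [hσs]
    simp only [dif_pos hc, e1, e2, e3]
  have hstar : ∀ b ∈ chaseF ν'₀ L' J 1, Atom.subst σs b ∈ chaseF ν L J K := by
    intro b hb
    rcases hb with hbJ | ⟨R', hR', π, hπ, h, hh, rfl⟩
    · rw [Atom.subst_of_ground_mem hJ.2 hbJ]
      exact chaseF_mono (Nat.zero_le K) hbJ
    · have htrig : ∃ ρ, isHom ρ R'.body J ∧ restrict ρ R'.frontier = restrict π R'.frontier :=
        ⟨π, hπ, rfl⟩
      obtain ⟨hwf, hws⟩ := hWspec R' (restrict π R'.frontier) hR' htrig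
      have hkey : Atom.subst σs (Atom.subst (safeSub ν'₀ R' π) h) =
          Atom.subst (W R' (restrict π R'.frontier)) h := by
        rw [Atom.subst_subst]
        apply Atom.subst_congr
        intro t ht
        obtain ⟨y, rfl⟩ := (hL' R' hR').head_noconst (mem_termsOf.2 ⟨h, hh, ht⟩)
        have hy : y ∈ varsOf R'.head := mem_varsOf.2 (mem_termsOf.2 ⟨h, hh, ht⟩)
        simp only [Term.subst]
        by_cases hye : y ∈ R'.exist
        · rw [safeSub_exist hye]
          simp only [Term.subst]
          exact heval R' (restrict π R'.frontier) y hR' (restrict_restrict π R'.frontier).symm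
        · have hyf : y ∈ R'.frontier := (head_var_cases hy).resolve_right hye
          rw [safeSub_not_exist hye, hwf y hyf, restrict_apply_mem hyf]
          have : π y ∈ termsOf J :=
            frontier_value_mem hπ (frontier_subset_bodyvars hyf)
          cases hc : π y with
          | const c => rfl
          | var u => exact absurd (hc ▸ this) (not_var_mem_ground hJ.2 u)
      rw [hkey]
      exact hws ⟨h, hh, rfl⟩
  refine ⟨fun v => Term.subst σs (σ v), ?_⟩
  intro a ha
  have he : Atom.subst (fun v => Term.subst σs (σ v)) a =
      Atom.subst σs (Atom.subst σ a) := (Atom.subst_subst σs σ a).symm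
  rw [he]
  exact hstar _ (hσhom ⟨a, ha, rfl⟩)

end Catchup

section Freeze

def fz (M : ℕ) : Term → Term
  | .var m => Term.const (m + M)
  | .const c => Term.const c

def uf (M : ℕ) : Term → Term
  | .const c => if M ≤ c then Term.var (c - M) else Term.const c
  | .var v => Term.var v

lemma fz_isConst (M : ℕ) (t : Term) : (fz M t).isConst := by
  cases t <;> trivial

lemma uf_fz {M : ℕ} {t : Term} (h : ∀ c, t = Term.const c → c < M) :
    uf M (fz M t) = t := by
  cases t with
  | var m =>
      simp only [fz, uf, if_pos (Nat.le_add_left M m)]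
      rw [Nat.add_sub_cancel]
  | const c =>
      have := h c rfl
      simp only [fz, uf, if_neg (by omega : ¬ M ≤ c)]

lemma exists_const_bound {I : Set Atom} (hI : I.Finite) :
    ∃ M, ∀ c, Term.const c ∈ termsOf I → c < M := by
  have hfin : {c : ℕ | Term.const c ∈ termsOf I}.Finite :=
    Set.Finite.preimage (fun x _ y _ h => Term.const.inj h) (termsOf_finite hI)
  obtain ⟨b, hb⟩ := hfin.bddAbove
  exact ⟨b + 1, fun c hc => Nat.lt_succ_of_le (hb hc)⟩

lemma mapAtom_mapAtom (g f : Term → Term) (a : Atom) :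
    mapAtom g (mapAtom f a) = mapAtom (fun t => g (f t)) a := by
  simp [mapAtom, List.map_map, Function.comp_def]

/-- (H2) at a chase level: triggers whose nulls are already present produce old atoms. -/
lemma H2_chaseLevel {ν : Rule → (ℕ → Term) → ℕ → ℕ} {L : List Rule} (hL : WfList L)
    (hν : SONaming L ν) {I : Set Atom} (hg : ∀ t ∈ termsOf I, t.isConst) (j : ℕ) :
    ∀ R ∈ L, ∀ (π : ℕ → Term) (x n : ℕ), x ∈ R.exist →
      isHom π R.body (chaseF ν L (chaseF ν L I j) n) →
      Term.var (ν R (restrict π R.frontier) x) ∈ termsOf (chaseF ν L I j) →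
      substSet (safeSub ν R π) R.head ⊆ chaseF ν L I j := by
  intro R hR π x n hx hπ hvar
  rcases null_fired hL hν hR hvar with hI0 | ⟨m, hm, π₀, hπ₀, hres⟩
  · exact absurd hI0 (not_var_mem_ground hg _)
  · rintro a ⟨h, hh, rfl⟩
    rw [safeSub_head_congr hres.symm hh]
    have : Atom.subst (safeSub ν R π₀) h ∈ chaseF ν L I (m + 1) :=
      Or.inr ⟨R, hR, π₀, hπ₀, ⟨h, hh, rfl⟩⟩
    exact chaseF_mono (by omega) this

/-- Claim C: an atom of the chase whose nulls appear by level `j` is itself present by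
level `j + K`. -/
lemma claimC {L : List Rule} (hL : WfList L) {K : ℕ}
    (hcat : ∀ (ν : Rule → (ℕ → Term) → ℕ → ℕ), SONaming L ν → ∀ J, IsInstance J →
      ∃ σc : ℕ → Term, ∀ a ∈ chaseInf ν L J, Atom.subst σc a ∈ chaseF ν L J K)
    {ν : Rule → (ℕ → Term) → ℕ → ℕ} (hν : SONaming L ν) {I : Set Atom}
    (hI : IsInstance I) {j : ℕ} {a : Atom} (ha : a ∈ chaseInf ν L I)
    (hterms : ∀ t ∈ a.terms, (∃ c, t = Term.const c) ∨ t ∈ termsOf (chaseF ν L I j)) :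
    a ∈ chaseF ν L I (j + K) := by
  obtain ⟨n, han⟩ := mem_chaseInf.1 ha
  have han' : a ∈ chaseF ν L (chaseF ν L I j) n := by
    rw [← chaseF_add]
    exact chaseF_mono (by omega) han
  obtain ⟨M, hM⟩ := exists_const_bound hI.1
  set S₀ := chaseF ν L I j with hS₀
  set F := mapAtom (fz M) '' S₀ with hF
  have hFinst : IsInstance F := by
    constructor
    · exact (chaseF_finite hL hI.1 j).image _
    · intro t ht
      rw [mem_termsOf] at ht
      obtain ⟨b, ⟨b₀, hb₀, rfl⟩, htb⟩ := ht
      rw [mem_terms_mapAtom] at htb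
      obtain ⟨s, hs, rfl⟩ := htb
      exact fz_isConst M s
  have H1 : ∀ b ∈ S₀, mapAtom (fz M) b ∈ chaseF ν L F 0 := fun b hb => ⟨b, hb, rfl⟩
  have hsim := sim_main hL hν (fz M) H1 (H2_chaseLevel hL hν hI.2 j) (ν₂ := ν) (T₀ := F)
  have hfz : mapAtom (delta ν ν L (termsOf S₀) (fz M) n) a = mapAtom (fz M) a := by
    apply mapAtom_congr
    intro t ht
    rcases hterms t ht with ⟨c, rfl⟩ | htS
    · rw [delta_const]
    · exact delta_mem_base n htS
  have hata : mapAtom (fz M) a ∈ chaseF ν L F n := by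
    have := hsim n a han'
    rwa [hfz, Nat.zero_add] at this
  -- the frozen atom is ground, so its homomorphic image is itself
  have hgr : ∀ t ∈ (mapAtom (fz M) a).terms, t.isConst := by
    intro t ht
    rw [mem_terms_mapAtom] at ht
    obtain ⟨s, hs, rfl⟩ := ht
    exact fz_isConst M s
  obtain ⟨σc, hσc⟩ := hcat ν hν F hFinst
  have hata2 : mapAtom (fz M) a ∈ chaseF ν L F K := by
    have := hσc _ (chaseF_subset_chaseInf ν L F n hata)
    rwa [Atom.subst_ground hgr] at this
  -- unfreeze
  have H1' : ∀ b ∈ F, mapAtom (uf M) b ∈ chaseF ν L I j := by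
    rintro b ⟨b₀, hb₀, rfl⟩
    rw [mapAtom_mapAtom]
    have : mapAtom (fun t => uf M (fz M t)) b₀ = b₀ := by
      apply mapAtom_ground
      intro t ht
      apply uf_fz
      rintro c rfl
      exact hM c (const_origin hL (mem_termsOf.2 ⟨b₀, hb₀, ht⟩))
    rw [this]
    exact hb₀
  have H2' : ∀ R ∈ L, ∀ (π : ℕ → Term) (x n : ℕ), x ∈ R.exist →
      isHom π R.body (chaseF ν L F n) →
      Term.var (ν R (restrict π R.frontier) x) ∈ termsOf F →
      substSet (safeSub ν R π) R.head ⊆ F := by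
    intro R _ π x n _ _ hvar
    exact absurd hvar (not_var_mem_ground hFinst.2 _)
  have hsim' := sim_main hL hν (uf M) H1' H2' (ν₂ := ν) (T₀ := I)
  have hres := hsim' K _ hata2
  have hid : mapAtom (delta ν ν L (termsOf F) (uf M) K) (mapAtom (fz M) a) = a := by
    rw [mapAtom_mapAtom]
    apply mapAtom_ground
    intro t ht
    have hconst : ∀ c, t = Term.const c → c < M := by
      rintro c rfl
      have : Term.const c ∈ termsOf (chaseF ν L I n) := mem_termsOf.2 ⟨a, han, ht⟩
      exact hM c (const_origin hL this)
    have hfzc : ∃ c', fz M t = Term.const c' := by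
      cases t with
      | var m => exact ⟨m + M, rfl⟩
      | const c => exact ⟨c, rfl⟩
    obtain ⟨c', hc'⟩ := hfzc
    rw [hc', delta_const, ← hc']
    exact uf_fz hconst
  rwa [hid] at hres

/-- Presence recursion: a null whose frontier values appear by level `j` is created by
level `j + K + 1`. -/
lemma presence {L : List Rule} (hL : WfList L) {K : ℕ}
    (hcat : ∀ (ν : Rule → (ℕ → Term) → ℕ → ℕ), SONaming L ν → ∀ J, IsInstance J →
      ∃ σc : ℕ → Term, ∀ a ∈ chaseInf ν L J, Atom.subst σc a ∈ chaseF ν L J K)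
    {ν : Rule → (ℕ → Term) → ℕ → ℕ} (hν : SONaming L ν) {I : Set Atom}
    (hI : IsInstance I) {j : ℕ} {R : Rule} (hR : R ∈ L) {π : ℕ → Term} {x : ℕ}
    (hx : x ∈ R.exist) {n : ℕ} (hπ : isHom π R.body (chaseF ν L I n))
    (hfr : ∀ y ∈ R.frontier, (∃ c, π y = Term.const c) ∨ π y ∈ termsOf (chaseF ν L I j)) :
    Term.var (ν R (restrict π R.frontier) x) ∈ termsOf (chaseF ν L I (j + K + 1)) := by
  obtain ⟨M, hM⟩ := exists_const_bound hI.1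
  set S₀ := chaseF ν L I j with hS₀
  set F := mapAtom (fz M) '' S₀ with hF
  have hFinst : IsInstance F := by
    constructor
    · exact (chaseF_finite hL hI.1 j).image _
    · intro t ht
      rw [mem_termsOf] at ht
      obtain ⟨b, ⟨b₀, hb₀, rfl⟩, htb⟩ := ht
      rw [mem_terms_mapAtom] at htb
      obtain ⟨s, hs, rfl⟩ := htb
      exact fz_isConst M s
  have H1 : ∀ b ∈ S₀, mapAtom (fz M) b ∈ chaseF ν L F 0 := fun b hb => ⟨b, hb, rfl⟩
  have hsim := sim_main hL hν (fz M) H1 (H2_chaseLevel hL hν hI.2 j) (ν₂ := ν) (T₀ := F)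
  obtain ⟨σc, hσc⟩ := hcat ν hν F hFinst
  -- the translated trigger
  set π₂ : ℕ → Term := fun v =>
    Term.subst σc (delta ν ν L (termsOf S₀) (fz M) n (π v)) with hπ₂
  have hπ' : isHom π R.body (chaseF ν L (chaseF ν L I j) n) := by
    intro b hb
    rw [← chaseF_add]
    exact chaseF_mono (by omega) (hπ hb)
  have hhom2 : isHom π₂ R.body (chaseF ν L F K) := by
    rintro b ⟨b₀, hb₀, rfl⟩
    have he : Atom.subst π₂ b₀ =
        Atom.subst σc (Atom.subst (fun v => delta ν ν L (termsOf S₀) (fz M) n (π v)) b₀) := by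
      rw [Atom.subst_subst]
    have he2 : Atom.subst (fun v => delta ν ν L (termsOf S₀) (fz M) n (π v)) b₀ =
        mapAtom (delta ν ν L (termsOf S₀) (fz M) n) (Atom.subst π b₀) :=
      (mapAtom_subst_vars (fun t ht =>
        (hL R hR).body_noconst (mem_termsOf.2 ⟨b₀, hb₀, ht⟩))).symm
    rw [he, he2]
    apply hσc
    apply chaseF_subset_chaseInf ν L F n
    have := hsim n _ (hπ' ⟨b₀, hb₀, rfl⟩)
    rwa [Nat.zero_add] at this
  -- the value of π₂ on the frontier is the frozen frontier
  have hval : ∀ y ∈ R.frontier, π₂ y = fz M (π y) := by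
    intro y hy
    rcases hfr y hy with ⟨c, hc⟩ | hyS
    · rw [hπ₂]
      simp only [hc, delta_const]
      rfl
    · rw [hπ₂]
      simp only [delta_mem_base n hyS]
      cases hfzt : fz M (π y) with
      | const c => rfl
      | var u => exact absurd (fz_isConst M (π y)) (by rw [hfzt]; simp [Term.isConst])
  -- fire the trigger in the frozen chase
  obtain ⟨h, hh, hxh⟩ : ∃ h ∈ R.head, Term.var x ∈ h.terms := by
    have : Term.var x ∈ termsOf R.head := mem_varsOf.1 hx.1
    rw [mem_termsOf] at this
    exact this
  have ha2 : Atom.subst (safeSub ν R π₂) h ∈ chaseF ν L F (K + 1) :=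
    Or.inr ⟨R, hR, π₂, hhom2, ⟨h, hh, rfl⟩⟩
  have hterm2 : Term.var (ν R (restrict π₂ R.frontier) x) ∈
      termsOf (chaseF ν L F (K + 1)) := by
    refine mem_termsOf.2 ⟨_, ha2, ?_⟩
    rw [Atom.mem_terms_subst]
    exact ⟨Term.var x, hxh, by simp [Term.subst, safeSub_exist hx]⟩
  -- unfreeze
  have H1' : ∀ b ∈ F, mapAtom (uf M) b ∈ chaseF ν L I j := by
    rintro b ⟨b₀, hb₀, rfl⟩
    rw [mapAtom_mapAtom]
    have : mapAtom (fun t => uf M (fz M t)) b₀ = b₀ := by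
      apply mapAtom_ground
      intro t ht
      apply uf_fz
      rintro c rfl
      exact hM c (const_origin hL (mem_termsOf.2 ⟨b₀, hb₀, ht⟩))
    rw [this]
    exact hb₀
  have H2' : ∀ R ∈ L, ∀ (π : ℕ → Term) (x n : ℕ), x ∈ R.exist →
      isHom π R.body (chaseF ν L F n) →
      Term.var (ν R (restrict π R.frontier) x) ∈ termsOf F →
      substSet (safeSub ν R π) R.head ⊆ F := by
    intro R _ π x n _ _ hvar
    exact absurd hvar (not_var_mem_ground hFinst.2 _)
  have hsim' := sim_main hL hν (uf M) H1' H2' (ν₂ := ν) (T₀ := I)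
  -- value of the unfreezing translation on the new null
  rw [mem_termsOf] at hterm2
  obtain ⟨a2, ha2', hta2⟩ := hterm2
  have himg := hsim' (K + 1) a2 ha2'
  have hmem : delta ν ν L (termsOf F) (uf M) (K + 1)
      (Term.var (ν R (restrict π₂ R.frontier) x)) ∈
      termsOf (chaseF ν L I (j + (K + 1))) := by
    refine mem_termsOf.2 ⟨_, himg, ?_⟩
    rw [mem_terms_mapAtom]
    exact ⟨_, hta2, rfl⟩
  have heval : delta ν ν L (termsOf F) (uf M) (K + 1)
      (Term.var (ν R (restrict π₂ R.frontier) x)) =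
      Term.var (ν R (restrict π R.frontier) x) := by
    rw [delta_code hν hR (restrict_restrict π₂ R.frontier).symm
      (not_var_mem_ground hFinst.2 _)]
    congr 2
    funext v
    by_cases hv : v ∈ R.frontier
    · simp only [restrict_apply_mem hv]
      rw [hval v hv]
      have hconst : ∀ c, π v = Term.const c → c < M := by
        rintro c hc
        have : Term.const c ∈ termsOf (chaseF ν L I n) :=
          hc ▸ frontier_value_mem hπ (frontier_subset_bodyvars hv)
        exact hM c (const_origin hL this)
      have hfzc : ∃ c', fz M (π v) = Term.const c' := by
        cases π v with
        | var m => exact ⟨m + M, rfl⟩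
        | const c => exact ⟨c, rfl⟩
      obtain ⟨c', hc'⟩ := hfzc
      rw [hc', delta_const, ← hc']
      exact uf_fz hconst
    · rw [restrict_apply_not_mem hv, restrict_apply_not_mem hv]
  rw [heval] at hmem
  have : j + (K + 1) = j + K + 1 := by omega
  rwa [this] at hmem

end Freeze

section Collapse

/-- The shapes (predicate, arity) of body atoms of a rule list. -/
def bodyShapes (L : List Rule) : Set (ℕ × ℕ) :=
  {pr | ∃ R ∈ L, ∃ b ∈ R.body, b.pred = pr.1 ∧ b.args.length = pr.2}

/-- The critical instance. -/
def Istar (L : List Rule) : Set Atom :=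
  (fun pr : ℕ × ℕ => ⟨pr.1, List.replicate pr.2 (Term.const 0)⟩) '' bodyShapes L

/-- The body-relevant part of an instance. -/
def Irel (L : List Rule) (I : Set Atom) : Set Atom :=
  {a | a ∈ I ∧ (a.pred, a.args.length) ∈ bodyShapes L}

/-- The term collapse onto the critical instance. -/
def collapseT : Term → Term
  | .const _ => Term.const 0
  | .var m => Term.var m

lemma bodyShapes_finite {L : List Rule} (hL : WfList L) : (bodyShapes L).Finite := by
  have hsub : bodyShapes L ⊆
      ⋃ R ∈ {R | R ∈ L}, (fun b : Atom => (b.pred, b.args.length)) '' R.body := by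
    rintro ⟨p, k⟩ ⟨R, hR, b, hb, h1, h2⟩
    exact Set.mem_biUnion hR ⟨b, hb, by simp [h1, h2]⟩
  exact (Set.Finite.biUnion L.finite_toSet (fun R hR => (hL R hR).1.image _)).subset hsub

lemma Istar_instance {L : List Rule} (hL : WfList L) : IsInstance (Istar L) := by
  constructor
  · exact (bodyShapes_finite hL).image _
  · intro t ht
    rw [mem_termsOf] at ht
    obtain ⟨a, ⟨pr, _, rfl⟩, hta⟩ := ht
    have : t ∈ List.replicate pr.2 (Term.const 0) := hta
    rw [List.eq_of_mem_replicate this]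
    trivial

lemma Irel_instance {L : List Rule} {I : Set Atom} (hI : IsInstance I) :
    IsInstance (Irel L I) :=
  ⟨hI.1.subset (fun _ h => h.1), fun t ht =>
    hI.2 t (termsOf_mono (fun _ h => h.1) ht)⟩

lemma shape_subst (π : ℕ → Term) (b : Atom) :
    ((Atom.subst π b).pred, (Atom.subst π b).args.length) = (b.pred, b.args.length) := by
  simp [Atom.subst]

/-- The chase only sees the body-relevant part of the instance. -/
lemma chase_rel {L : List Rule} {ν : Rule → (ℕ → Term) → ℕ → ℕ} {I : Set Atom} (n : ℕ) :
    chaseF ν L I n = chaseF ν L (Irel L I) n ∪ (I \ Irel L I) := by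
  induction n with
  | zero =>
      show I = Irel L I ∪ (I \ Irel L I)
      rw [Set.union_diff_cancel (fun a ha => ha.1)]
  | succ n ih =>
      show chaseStep ν L (chaseF ν L I n) = chaseStep ν L (chaseF ν L (Irel L I) n) ∪ _
      rw [ih]
      ext a
      constructor
      · rintro (h | ⟨R, hR, π, hπ, hmem⟩)
        · rcases h with h | h
          · exact Or.inl (Or.inl h)
          · exact Or.inr h
        · refine Or.inl (Or.inr ⟨R, hR, π, ?_, hmem⟩)
          rintro b ⟨b₀, hb₀, rfl⟩
          rcases hπ ⟨b₀, hb₀, rfl⟩ with h | h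
          · exact h
          · exfalso
            apply h.2
            refine ⟨h.1, ?_⟩
            have := shape_subst π b₀
            rw [this]
            exact ⟨R, hR, b₀, hb₀, rfl, rfl⟩
      · rintro (h | h)
        · rcases h with h | ⟨R, hR, π, hπ, hmem⟩
          · exact Or.inl (Or.inl h)
          · exact Or.inr ⟨R, hR, π, fun b hb => Or.inl (hπ hb), hmem⟩
        · exact Or.inl (Or.inr h)

lemma delta_var {ν₁ ν₂ : Rule → (ℕ → Term) → ℕ → ℕ} {L : List Rule} {B : Set Term}
    {β : Term → Term} (hβ : ∀ m : ℕ, ∃ m', β (Term.var m) = Term.var m')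
    (n u : ℕ) : ∃ m', delta ν₁ ν₂ L B β n (Term.var u) = Term.var m' := by
  cases n with
  | zero => exact hβ u
  | succ n =>
      simp only [delta]
      by_cases h1 : Term.var u ∈ B
      · rw [if_pos h1]; exact hβ u
      · rw [if_neg h1]
        by_cases h2 : IsCode ν₁ L (Term.var u)
        · rw [if_pos h2]; exact ⟨_, rfl⟩
        · rw [if_neg h2]; exact hβ u

/-- The main induction: nulls are present at a level bounded by the collapsed depth. -/
lemma null_presence_bound {L : List Rule} (hL : WfList L) {K : ℕ}
    (hcat : ∀ (ν : Rule → (ℕ → Term) → ℕ → ℕ), SONaming L ν → ∀ J, IsInstance J →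
      ∃ σc : ℕ → Term, ∀ a ∈ chaseInf ν L J, Atom.subst σc a ∈ chaseF ν L J K)
    {ν₀ : Rule → (ℕ → Term) → ℕ → ℕ} (hν₀ : SONaming L ν₀) :
    ∀ d (ν : Rule → (ℕ → Term) → ℕ → ℕ), SONaming L ν → ∀ Ib, IsInstance Ib →
      ∀ (n u : ℕ), Term.var u ∈ termsOf (chaseF ν L Ib n) →
      delta ν ν₀ L (termsOf Ib) collapseT n (Term.var u) ∈
        termsOf (chaseF ν₀ L (Istar L) d) →
      Term.var u ∈ termsOf (chaseF ν L Ib ((K + 1) * d)) := by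
  intro d
  induction d with
  | zero =>
      intro ν hν Ib hIb n u hu hdu
      obtain ⟨m', hm'⟩ := delta_var (ν₁ := ν) (ν₂ := ν₀) (L := L) (B := termsOf Ib)
        (β := collapseT) (fun m => ⟨m, rfl⟩) n u
      rw [hm'] at hdu
      exact absurd hdu (not_var_mem_ground (Istar_instance hL).2 m')
  | succ d ihd =>
      intro ν hν Ib hIb n u
      induction n using Nat.strong_induction_on with
      | _ n ihn =>
          intro hu hdu
          cases n with
          | zero => exact absurd hu (not_var_mem_ground hIb.2 u)
          | succ n' =>
              rcases term_origin hL hu with hold | ⟨R, hR, π, x, hπ, hx, hequ⟩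
              · have hco := delta_coh (ν₂ := ν₀) hL hν collapseT n' _ hold (n' + 1)
                  (Nat.le_succ n')
                rw [hco] at hdu
                exact ihn n' (Nat.lt_succ_self n') hold hdu
              · have hu' := Term.var.inj hequ
                subst hu'
                rw [delta_code hν hR (restrict_restrict π R.frontier).symm
                  (not_var_mem_ground hIb.2 _)] at hdu
                rcases null_fired hL hν₀ hR hdu with hIs | ⟨m, hm, πs, hπs, hres⟩
                · exact absurd hIs (not_var_mem_ground (Istar_instance hL).2 _)
                · have hfr : ∀ y ∈ R.frontier, (∃ c, π y = Term.const c) ∨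
                      π y ∈ termsOf (chaseF ν L Ib ((K + 1) * d)) := by
                    intro y hy
                    cases hc : π y with
                    | const c => exact Or.inl ⟨c, rfl⟩
                    | var w =>
                        refine Or.inr ?_
                        have hw1 : Term.var w ∈ termsOf (chaseF ν L Ib n') :=
                          hc ▸ frontier_value_mem hπ (frontier_subset_bodyvars hy)
                        have hres' := congrFun hres y
                        rw [restrict_apply_mem hy, restrict_apply_mem hy,
                          restrict_apply_mem hy] at hres'
                        have hw2 : delta ν ν₀ L (termsOf Ib) collapseT n' (Term.var w) ∈
                            termsOf (chaseF ν₀ L (Istar L) d) := by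
                          have hmem : πs y ∈ termsOf (chaseF ν₀ L (Istar L) m) :=
                            frontier_value_mem hπs (frontier_subset_bodyvars hy)
                          have : πs y = delta ν ν₀ L (termsOf Ib) collapseT n' (π y) := hres'
                          rw [this, hc] at hmem
                          exact termsOf_mono (chaseF_mono (by omega)) hmem
                        exact ihd ν hν Ib hIb n' w hw1 hw2
                  have hpres := presence hL hcat hν hIb hR hx hπ hfr
                  have : (K + 1) * d + K + 1 = (K + 1) * (d + 1) := by ring
                  rwa [this] at hpres

end Collapse
/-- a parallelisable rule set is bounded. -/
theorem parallelisable_implies_bounded (L : List Rule) (hL : WfList L)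
    (h : Parallelisable L) : Bounded L := by
  obtain ⟨L', hL', hpar⟩ := h
  have hν₀ : SONaming L (canonNaming L) := canonNaming_spec hL
  have hν'₀ : SONaming L' (canonNaming L') := canonNaming_spec hL'
  set ν₀ := canonNaming L
  set ν'₀ := canonNaming L'
  obtain ⟨K, hcat⟩ := catchup hL hL' hpar ν₀ ν'₀ hν₀ hν'₀
  have hIstar : IsInstance (Istar L) := Istar_instance hL
  obtain ⟨σ, hσ⟩ := (hpar ν₀ ν'₀ hν₀ hν'₀ (Istar L) hIstar).1
  have hfin : (chaseInf ν₀ L (Istar L)).Finite :=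
    finite_of_injhom (chaseF_finite hL' hIstar.1 1) hσ
  obtain ⟨D, hD⟩ := finite_subset_chaseF hfin subset_rfl
  refine ⟨(K + 1) * D + K, ?_⟩
  intro ν hν I hI
  apply Set.Subset.antisymm (chaseF_subset_chaseInf ν L I _)
  intro a ha
  obtain ⟨n, han⟩ := mem_chaseInf.1 ha
  rw [chase_rel n] at han
  rcases han with han | hjunk
  · have hIrel : IsInstance (Irel L I) := Irel_instance hI
    have H1c : ∀ b ∈ Irel L I, mapAtom collapseT b ∈ chaseF ν₀ L (Istar L) 0 := by
      intro b hb
      refine ⟨(b.pred, b.args.length), hb.2, ?_⟩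
      show (⟨b.pred, List.replicate b.args.length (Term.const 0)⟩ : Atom) = mapAtom collapseT b
      have hrep : b.args.map collapseT = List.replicate b.args.length (Term.const 0) := by
        rw [List.eq_replicate_iff]
        refine ⟨by simp, ?_⟩
        intro t' ht'
        rw [List.mem_map] at ht'
        obtain ⟨t, ht, rfl⟩ := ht'
        have hc := hI.2 t (mem_termsOf.2 ⟨b, hb.1, ht⟩)
        cases t with
        | const c => rfl
        | var v => exact absurd hc (by simp [Term.isConst])
      simp [mapAtom, hrep]
    have H2c : ∀ R ∈ L, ∀ (π : ℕ → Term) (x n : ℕ), x ∈ R.exist →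
        isHom π R.body (chaseF ν L (Irel L I) n) →
        Term.var (ν R (restrict π R.frontier) x) ∈ termsOf (Irel L I) →
        substSet (safeSub ν R π) R.head ⊆ Irel L I := by
      intro R _ π x n _ _ hvar
      exact absurd hvar (not_var_mem_ground hIrel.2 _)
    have hsimc := sim_main hL hν collapseT H1c H2c (ν₂ := ν₀) (T₀ := Istar L)
    have hterms : ∀ t ∈ a.terms, (∃ c, t = Term.const c) ∨
        t ∈ termsOf (chaseF ν L (Irel L I) ((K + 1) * D)) := by
      intro t ht
      cases t with
      | const c => exact Or.inl ⟨c, rfl⟩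
      | var u =>
          refine Or.inr ?_
          have hu : Term.var u ∈ termsOf (chaseF ν L (Irel L I) n) :=
            mem_termsOf.2 ⟨a, han, ht⟩
          have himg := hsimc n a han
          rw [Nat.zero_add] at himg
          have hdu : delta ν ν₀ L (termsOf (Irel L I)) collapseT n (Term.var u) ∈
              termsOf (chaseF ν₀ L (Istar L) D) := by
            refine termsOf_mono ((chaseF_subset_chaseInf ν₀ L (Istar L) n).trans hD) ?_
            refine mem_termsOf.2 ⟨_, himg, ?_⟩
            rw [mem_terms_mapAtom]
            exact ⟨Term.var u, ht, rfl⟩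
          exact null_presence_bound hL hcat hν₀ D ν hν (Irel L I) hIrel n u hu hdu
    have hC := claimC hL hcat hν hIrel
      (chaseF_subset_chaseInf ν L (Irel L I) n han) hterms
    exact chaseF_base_mono (fun b hb => hb.1) _ hC
  · exact chaseF_mono (Nat.zero_le _) hjunk.1
end ER
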